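/- For every nonempty family F of increasing functions [0,∞] → [0,∞] that is closed under pointwise addition and under composition, there exists a nonempty family G of ICOD functions, closed under pointwise addition and under composition, such that the operator-norm closure of ⋃_{g∈G} B_g equals the operator-norm closure of ⋃_{f∈F} B_f. -/

import Mathlib

open MeasureTheory ENNReal Filter

noncomputable section

/-- The Hilbert space `L²(ℝ)` with Lebesgue measure. -/
abbrev L2R : Type := MeasureTheory.Lp ℂ 2 (MeasureTheory.volume : MeasureTheory.Measure ℝ)

/-- The Lebesgue measure of the support of (a representative of) `ξ ∈ L²(ℝ)`. -/
def musupp (ξ : L2R) : ℝ≥0∞ := MeasureTheory.volume (Function.support (ξ : ℝ → ℂ))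

/-- The support expansion function `Φ_a` of a bounded operator `a` on `L²(ℝ)`:
`Φ_a(x) = sup { μ(supp(aξ)) : μ(supp ξ) ≤ x }`. -/
def Phi (a : L2R →L[ℂ] L2R) (x : ℝ≥0∞) : ℝ≥0∞ :=
  ⨆ ξ : {ξ : L2R // musupp ξ ≤ x}, musupp (a ξ.1)

/-- The set `B_f` of operators controlled by `f`: both `Φ_a ≤ f` and `Φ_{a*} ≤ f`. -/
def Bset (f : ℝ≥0∞ → ℝ≥0∞) : Set (L2R →L[ℂ] L2R) :=
  {a | (∀ x, Phi a x ≤ f x) ∧ (∀ x, Phi (ContinuousLinearMap.adjoint a) x ≤ f x)}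

/-- `f : [0,∞] → [0,∞]` is ICOD: increasing, concave down, `f 0 = 0`, `f ∞ = sup_{t<∞} f t`. -/
def ICOD (f : ℝ≥0∞ → ℝ≥0∞) : Prop :=
  Monotone f ∧
  (∀ a b x y : ℝ≥0∞, a + b = 1 → a * f x + b * f y ≤ f (a * x + b * y)) ∧
  f 0 = 0 ∧
  f ⊤ = ⨆ t ∈ Set.Iio (⊤ : ℝ≥0∞), f t


section AuxSupportExpansion
open Set

lemma exists_subset_volume_eq {E : Set ℝ} (hE : MeasurableSet E) {x : ℝ≥0∞}
    (hx : x ≤ volume E) (hxt : x ≠ ⊤) (hEt : volume E ≠ ⊤) :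
    ∃ S, S ⊆ E ∧ MeasurableSet S ∧ volume S = x := by
  rcases eq_or_ne x 0 with rfl | hx0
  · exact ⟨∅, empty_subset E, MeasurableSet.empty, measure_empty⟩
  rcases eq_or_lt_of_le hx with rfl | hxlt
  · exact ⟨E, subset_rfl, hE, rfl⟩
  set φ : ℝ → ℝ := fun c => (volume (E ∩ Iic c)).toReal with hφ
  have hfin : ∀ c, volume (E ∩ Iic c) ≠ ⊤ :=
    fun c => ne_top_of_le_ne_top hEt (measure_mono inter_subset_left)
  have hmono : Monotone φ := fun c c' hcc =>
    ENNReal.toReal_mono (hfin c') (measure_mono (inter_subset_inter_right E (Iic_subset_Iic.2 hcc)))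
  have h1 : ∀ c' c : ℝ, c' ≤ c → φ c ≤ φ c' + (c - c') := by
    intro c' c hcc
    have key : volume (E ∩ Iic c) ≤ volume (E ∩ Iic c') + ENNReal.ofReal (c - c') := by
      calc volume (E ∩ Iic c) ≤ volume ((E ∩ Iic c') ∪ Ioc c' c) := by
            apply measure_mono
            rintro y ⟨hyE, hy⟩
            rcases le_or_gt y c' with h | h
            · exact Or.inl ⟨hyE, h⟩
            · exact Or.inr ⟨h, hy⟩
        _ ≤ volume (E ∩ Iic c') + volume (Ioc c' c) := measure_union_le _ _
        _ = volume (E ∩ Iic c') + ENNReal.ofReal (c - c') := by rw [Real.volume_Ioc]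
    have := ENNReal.toReal_mono (ENNReal.add_ne_top.2 ⟨hfin c', ofReal_ne_top⟩) key
    rwa [ENNReal.toReal_add (hfin c') ofReal_ne_top,
      ENNReal.toReal_ofReal (sub_nonneg.2 hcc)] at this
  have hcont : Continuous φ := by
    have : LipschitzWith 1 φ := by
      apply LipschitzWith.of_dist_le_mul
      intro c c'
      wlog hcc : c' ≤ c generalizing c c'
      · rw [dist_comm, dist_comm c c']; exact this c' c (le_of_not_ge hcc)
      rw [Real.dist_eq, Real.dist_eq, abs_of_nonneg (sub_nonneg.2 (hmono hcc)),
        abs_of_nonneg (sub_nonneg.2 hcc), NNReal.coe_one, one_mul]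
      linarith [h1 c' c hcc]
    exact this.continuous
  have hxR : 0 < x.toReal := ENNReal.toReal_pos hx0 hxt
  have hlow : ∃ A : ℝ, φ A < x.toReal := by
    have hanti : Antitone fun n : ℕ => E ∩ Iic (-(n : ℝ)) := by
      intro m n hmn
      exact inter_subset_inter_right E (Iic_subset_Iic.2 (by
        simp only [neg_le_neg_iff]; exact_mod_cast hmn))
    have hiInter : (⋂ n : ℕ, E ∩ Iic (-(n : ℝ))) = ∅ := by
      apply eq_empty_iff_forall_notMem.2
      intro y hy
      obtain ⟨n, hn⟩ := exists_nat_gt (-y)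
      have := (mem_iInter.1 hy n).2
      simp only [mem_Iic] at this
      linarith
    have htend : Tendsto (fun n : ℕ => volume (E ∩ Iic (-(n : ℝ)))) atTop (nhds 0) := by
      have := tendsto_measure_iInter_atTop (μ := volume)
        (fun n : ℕ => (hE.inter measurableSet_Iic).nullMeasurableSet) hanti
        ⟨0, hfin _⟩
      rwa [hiInter, measure_empty] at this
    obtain ⟨n, hn⟩ := (htend.eventually_lt_const (zero_lt_iff.2 hx0)).exists
    exact ⟨-(n : ℝ), by
      have := ENNReal.toReal_strict_mono hxt hn
      simpa [hφ] using this⟩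
  have hhigh : ∃ B : ℝ, x.toReal < φ B := by
    have hmonoS : Monotone fun n : ℕ => E ∩ Iic ((n : ℝ)) := by
      intro m n hmn
      exact inter_subset_inter_right E (Iic_subset_Iic.2 (by exact_mod_cast hmn))
    have hiUnion : (⋃ n : ℕ, E ∩ Iic ((n : ℝ))) = E := by
      apply Subset.antisymm (iUnion_subset fun n => inter_subset_left)
      intro y hy
      obtain ⟨n, hn⟩ := exists_nat_gt y
      exact mem_iUnion.2 ⟨n, hy, le_of_lt hn⟩
    have htend : Tendsto (fun n : ℕ => volume (E ∩ Iic ((n : ℝ)))) atTop (nhds (volume E)) := by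
      have := tendsto_measure_iUnion_atTop (μ := volume) hmonoS
      rwa [hiUnion] at this
    obtain ⟨n, hn⟩ := (htend.eventually_const_lt hxlt).exists
    exact ⟨(n : ℝ), ENNReal.toReal_strict_mono (hfin _) hn⟩
  obtain ⟨A, hA⟩ := hlow
  obtain ⟨B, hB⟩ := hhigh
  have hAB : min A B ≤ B := min_le_right A B
  have hmem : x.toReal ∈ Icc (φ (min A B)) (φ B) :=
    ⟨le_of_lt (lt_of_le_of_lt (hmono (min_le_left A B)) hA), le_of_lt hB⟩
  obtain ⟨c, -, hc⟩ := intermediate_value_Icc hAB hcont.continuousOn hmem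
  refine ⟨E ∩ Iic c, inter_subset_left, hE.inter measurableSet_Iic, ?_⟩
  exact (ENNReal.toReal_eq_toReal_iff' (hfin c) hxt).1 hc



def env0 (h : ℝ≥0∞ → ℝ≥0∞) (x : ℝ≥0∞) : ℝ≥0∞ :=
  ⨅ t ∈ Set.Ioo (0:ℝ≥0∞) ⊤, (x / t + 1) * h t

def env1 (h : ℝ≥0∞ → ℝ≥0∞) (x : ℝ≥0∞) : ℝ≥0∞ :=
  if x = 0 then 0 else env0 h x

def env (h : ℝ≥0∞ → ℝ≥0∞) (x : ℝ≥0∞) : ℝ≥0∞ :=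
  if x = ⊤ then ⨆ t ∈ Set.Iio (⊤:ℝ≥0∞), env1 h t else env1 h x

variable {h : ℝ≥0∞ → ℝ≥0∞}

lemma env0_mono : Monotone (env0 h) := by
  intro x y hxy
  exact iInf_mono fun t => iInf_mono fun ht => by gcongr

lemma env1_mono : Monotone (env1 h) := by
  intro x y hxy
  unfold env1
  split_ifs with hx hy hy
  · exact le_rfl
  · exact zero_le
  · exact absurd (le_antisymm (hy ▸ hxy : x ≤ 0) (zero_le : 0 ≤ x) : x = 0) hx
  · exact env0_mono hxy

lemma env_mono : Monotone (env h) := by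
  intro x y hxy
  unfold env
  split_ifs with hx hy
  · exact le_rfl
  · exact absurd (top_le_iff.1 (hx ▸ hxy)) hy
  · exact le_iSup₂_of_le x (lt_top_iff_ne_top.2 hx) le_rfl
  · exact env1_mono hxy

lemma env_zero : env h 0 = 0 := by simp [env, env1]

lemma env_top : env h ⊤ = ⨆ t ∈ Set.Iio (⊤:ℝ≥0∞), env h t := by
  unfold env
  simp only [if_pos rfl]
  apply le_antisymm
  · exact iSup₂_mono fun t ht => by rw [if_neg (ne_of_lt ht)]
  · exact iSup₂_mono fun t ht => by rw [if_neg (ne_of_lt ht)]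

lemma env1_concave : ∀ a b x y : ℝ≥0∞, a + b = 1 → x ≠ ⊤ → y ≠ ⊤ →
    a * env1 h x + b * env1 h y ≤ env1 h (a * x + b * y) := by
  have bcase : ∀ b y : ℝ≥0∞, b ≤ 1 → b ≠ 0 → y ≠ ⊤ →
      b * env1 h y ≤ env1 h (b * y) := by
    intro b y hb1 hb0 hy
    rcases eq_or_ne y 0 with rfl | hy0
    · simp [env1]
    have hby : b * y ≠ 0 := mul_ne_zero hb0 hy0
    rw [env1, if_neg hy0, env1, if_neg hby]
    refine le_iInf₂ fun t ht => ?_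
    calc b * env0 h y ≤ b * ((y / t + 1) * h t) :=
          mul_le_mul_right (iInf₂_le t ht) b
      _ = (b * y / t + b) * h t := by simp only [div_eq_mul_inv]; ring
      _ ≤ (b * y / t + 1) * h t := by gcongr
  intro a b x y hab hx hy
  have ha1 : a ≤ 1 := by rw [← hab]; exact le_self_add
  have hb1 : b ≤ 1 := by rw [← hab]; exact le_add_self
  rcases eq_or_ne a 0 with rfl | ha0
  · rw [zero_add] at hab
    subst hab
    simp only [zero_mul, one_mul, zero_add]
    exact le_rfl
  rcases eq_or_ne b 0 with rfl | hb0
  · rw [add_zero] at hab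
    subst hab
    simp only [zero_mul, one_mul, add_zero]
    exact le_rfl
  rcases eq_or_ne x 0 with rfl | hx0
  · have e0 : env1 h 0 = 0 := if_pos rfl
    simp only [e0, mul_zero, zero_add]
    exact bcase b y hb1 hb0 hy
  rcases eq_or_ne y 0 with rfl | hy0
  · have e0 : env1 h 0 = 0 := if_pos rfl
    simp only [e0, mul_zero, add_zero]
    exact bcase a x ha1 ha0 hx
  have hz0 : a * x + b * y ≠ 0 := by
    simp only [ne_eq, add_eq_zero, mul_eq_zero, not_and_or]
    exact Or.inl (by tauto)
  rw [env1, if_neg hx0, env1, if_neg hy0, env1, if_neg hz0]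
  refine le_iInf₂ fun t ht => ?_
  calc a * env0 h x + b * env0 h y
      ≤ a * ((x / t + 1) * h t) + b * ((y / t + 1) * h t) := by
        gcongr <;> exact iInf₂_le t ht
    _ = ((a * x + b * y) / t + (a + b)) * h t := by
        simp only [div_eq_mul_inv]; ring
    _ = ((a * x + b * y) / t + 1) * h t := by rw [hab]

lemma env_icod : ICOD (env h) := by
  refine ⟨env_mono, ?_, env_zero, env_top⟩
  intro a b x y hab
  rcases eq_or_ne a 0 with rfl | ha0
  · rw [zero_add] at hab; subst hab
    simp only [zero_mul, one_mul, zero_add]; exact le_rfl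
  rcases eq_or_ne b 0 with rfl | hb0
  · rw [add_zero] at hab; subst hab
    simp only [zero_mul, one_mul, add_zero]; exact le_rfl
  have htopcase : ∀ x y : ℝ≥0∞, a * x + b * y = ⊤ →
      a * env h x + b * env h y ≤ env h (a * x + b * y) := by
    intro x y hz
    calc a * env h x + b * env h y ≤ a * env h ⊤ + b * env h ⊤ := by
          gcongr <;> exact env_mono le_top
      _ = (a + b) * env h ⊤ := (add_mul a b _).symm
      _ = env h (a * x + b * y) := by rw [hab, one_mul, hz]
  rcases eq_or_ne x ⊤ with rfl | hx
  · exact htopcase ⊤ y (by rw [ENNReal.mul_top ha0, top_add])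
  rcases eq_or_ne y ⊤ with rfl | hy
  · exact htopcase x ⊤ (by rw [ENNReal.mul_top hb0, add_top])
  have hz : a * x + b * y ≠ ⊤ := by
    have ha1 : a ≤ 1 := by rw [← hab]; exact le_self_add
    have hb1 : b ≤ 1 := by rw [← hab]; exact le_add_self
    exact ENNReal.add_ne_top.2
      ⟨ne_top_of_le_ne_top hx (by calc a * x ≤ 1 * x := by gcongr
                                    _ = x := one_mul x),
       ne_top_of_le_ne_top hy (by calc b * y ≤ 1 * y := by gcongr
                                    _ = y := one_mul y)⟩
  rw [env, if_neg hx, env, if_neg hy, env, if_neg hz]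
  exact env1_concave a b x y hab hx hy

lemma le_env (hm : Monotone h) (h0 : h 0 = 0)
    (hsub : ∀ x y, h (x + y) ≤ h x + h y)
    (htop : h ⊤ ≤ ⨆ t ∈ Set.Iio (⊤:ℝ≥0∞), h t) :
    ∀ x, h x ≤ env h x := by
  have hnat : ∀ (m : ℕ) (t : ℝ≥0∞), h (m * t) ≤ m * h t := by
    intro m t
    induction m with
    | zero => simp [h0]
    | succ n ih =>
        push_cast
        rw [add_mul, one_mul, add_mul, one_mul]
        exact le_trans (hsub _ _) (add_le_add ih le_rfl)
  have main : ∀ x, x ≠ ⊤ → h x ≤ env1 h x := by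
    intro x hx
    rcases eq_or_ne x 0 with rfl | hx0
    · simp [env1, h0]
    rw [env1, if_neg hx0]
    refine le_iInf₂ fun t ht => ?_
    obtain ⟨ht0, htt⟩ := ht
    have hr : x / t ≠ ⊤ := (ENNReal.div_lt_top hx ht0.ne').ne
    set n : ℕ := ⌊(x / t).toReal⌋₊ with hn
    have hn_le : (n : ℝ≥0∞) ≤ x / t := by
      rw [← ENNReal.ofReal_natCast, ← ENNReal.ofReal_toReal hr]
      exact ENNReal.ofReal_le_ofReal (Nat.floor_le ENNReal.toReal_nonneg)
    have hr_le : x / t ≤ (n : ℝ≥0∞) + 1 := by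
      rw [← ENNReal.ofReal_natCast, ← ENNReal.ofReal_toReal hr, ← ENNReal.ofReal_one,
        ← ENNReal.ofReal_add (by positivity) (by norm_num)]
      exact ENNReal.ofReal_le_ofReal (le_of_lt (Nat.lt_floor_add_one _))
    have hx_le : x ≤ ((n : ℝ≥0∞) + 1) * t := by
      calc x = x / t * t := (ENNReal.div_mul_cancel ht0.ne' htt.ne).symm
        _ ≤ ((n : ℝ≥0∞) + 1) * t := mul_le_mul_left hr_le t
    calc h x ≤ h (((n : ℕ) + 1 : ℕ) * t) := hm (by push_cast; exact hx_le)
      _ ≤ (((n : ℕ) + 1 : ℕ) : ℝ≥0∞) * h t := hnat _ t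
      _ ≤ (x / t + 1) * h t := by
          apply mul_le_mul_left
          push_cast
          exact add_le_add hn_le le_rfl
  intro x
  rcases eq_or_ne x ⊤ with rfl | hx
  · rw [env, if_pos rfl]
    refine le_trans htop (iSup₂_mono fun t ht => main t (ne_of_lt ht))
  · rw [env, if_neg hx]; exact main x hx

lemma env_le_two_mul (hm : Monotone h) : ∀ x, env h x ≤ 2 * h x := by
  have main : ∀ x, x ≠ ⊤ → env1 h x ≤ 2 * h x := by
    intro x hx
    rcases eq_or_ne x 0 with rfl | hx0
    · simp [env1]
    rw [env1, if_neg hx0]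
    calc env0 h x ≤ (x / x + 1) * h x :=
          iInf₂_le x ⟨zero_lt_iff.2 hx0, lt_top_iff_ne_top.2 hx⟩
      _ = 2 * h x := by rw [ENNReal.div_self hx0 hx, one_add_one_eq_two]
  intro x
  rcases eq_or_ne x ⊤ with rfl | hx
  · rw [env, if_pos rfl]
    refine iSup₂_le fun t ht => le_trans (main t (ne_of_lt ht)) ?_
    exact mul_le_mul_right (hm le_top) 2
  · rw [env, if_neg hx]; exact main x hx




lemma icod_zero : ICOD (fun _ => 0) :=
  ⟨monotone_const, by simp, rfl, by simp⟩

lemma icod_add {f g : ℝ≥0∞ → ℝ≥0∞} (hf : ICOD f) (hg : ICOD g) :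
    ICOD (fun x => f x + g x) := by
  obtain ⟨hfm, hfc, hf0, hft⟩ := hf
  obtain ⟨hgm, hgc, hg0, hgt⟩ := hg
  refine ⟨fun x y hxy => add_le_add (hfm hxy) (hgm hxy), ?_, by simp [hf0, hg0], ?_⟩
  · intro a b x y hab
    calc a * (f x + g x) + b * (f y + g y)
        = (a * f x + b * f y) + (a * g x + b * g y) := by ring
      _ ≤ f (a * x + b * y) + g (a * x + b * y) :=
          add_le_add (hfc a b x y hab) (hgc a b x y hab)
  · simp only
    rw [hft, hgt]
    apply le_antisymm
    · refine ENNReal.biSup_add_biSup_le (s := Set.Iio (⊤:ℝ≥0∞)) (t := Set.Iio (⊤:ℝ≥0∞))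
        ⟨0, Set.mem_Iio.2 zero_lt_top⟩ ⟨0, Set.mem_Iio.2 zero_lt_top⟩ ?_
      intro i hi j hj
      refine le_iSup₂_of_le (max i j) (Set.mem_Iio.2 (max_lt (Set.mem_Iio.1 hi) (Set.mem_Iio.1 hj))) ?_
      exact add_le_add (hfm (le_max_left i j)) (hgm (le_max_right i j))
    · refine iSup₂_le fun t ht => add_le_add ?_ ?_ <;>
        exact le_iSup₂_of_le t ht le_rfl

lemma icod_chord {f : ℝ≥0∞ → ℝ≥0∞} (hf : ICOD f) {v s : ℝ≥0∞} (hv : v ≤ s)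
    (hs0 : s ≠ 0) (hst : s ≠ ⊤) : v / s * f s ≤ f v := by
  have h1 : v / s ≤ 1 := by
    rw [← ENNReal.div_self hs0 hst]; gcongr
  have h2 : v / s + (1 - v / s) = 1 := add_tsub_cancel_of_le h1
  have := hf.2.1 (v / s) (1 - v / s) s 0 h2
  rwa [hf.2.2.1, mul_zero, add_zero, add_zero,
    ENNReal.div_mul_cancel hs0 hst] at this

lemma icod_comp {f g : ℝ≥0∞ → ℝ≥0∞} (hf : ICOD f) (hg : ICOD g) :
    ICOD (f ∘ g) := by
  have hf' := hf
  obtain ⟨hfm, hfc, hf0, hft⟩ := hf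
  obtain ⟨hgm, hgc, hg0, hgt⟩ := hg
  refine ⟨hfm.comp hgm, ?_, by simp [Function.comp, hg0, hf0], ?_⟩
  · intro a b x y hab
    calc a * f (g x) + b * f (g y) ≤ f (a * g x + b * g y) := hfc a b _ _ hab
      _ ≤ f (g (a * x + b * y)) := hfm (hgc a b x y hab)
  · simp only [Function.comp]
    apply le_antisymm
    · by_cases hattain : ∃ t, t < (⊤:ℝ≥0∞) ∧ g t = g ⊤
      · obtain ⟨t, ht, hgt'⟩ := hattain
        exact le_iSup₂_of_le t ht (le_of_eq (by rw [hgt']))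
      push_neg at hattain
      set s := g ⊤ with hs
      set M := ⨆ t ∈ Set.Iio (⊤:ℝ≥0∞), f (g t) with hM
      have hlt : ∀ t, t < (⊤:ℝ≥0∞) → g t < s :=
        fun t ht => lt_of_le_of_ne (hgm le_top) (hattain t ht)
      have hvM : ∀ v, v < s → f v ≤ M := by
        intro v hv
        have hv' : v < ⨆ t ∈ Set.Iio (⊤:ℝ≥0∞), g t := by rw [← hgt]; exact hv
        rw [iSup_subtype', lt_iSup_iff] at hv'
        obtain ⟨⟨t, ht⟩, htv⟩ := hv'
        exact le_trans (hfm (le_of_lt htv)) (le_iSup₂_of_le t ht le_rfl)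
      have hs0 : s ≠ 0 := by
        intro h0
        have := hlt 0 zero_lt_top
        rw [hg0, h0] at this
        exact lt_irrefl 0 this
      rcases eq_or_ne s ⊤ with hstop | hstop
      · rw [hstop, hft]
        exact iSup₂_le fun u hu => hvM u (hstop ▸ hu)
      · have key : ∀ v : ↥(Set.Iio s), (v.1 : ℝ≥0∞) / s * f s ≤ M := fun v =>
          le_trans (icod_chord hf' (le_of_lt v.2) hs0 hstop) (hvM v.1 v.2)
        have hsup : (⨆ v : ↥(Set.Iio s), (v.1 : ℝ≥0∞)) = s := by
          apply le_antisymm (iSup_le fun v => le_of_lt v.2)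
          by_contra hlt'
          push_neg at hlt'
          obtain ⟨c, hc1, hc2⟩ := exists_between hlt'
          exact absurd (le_iSup (fun v : ↥(Set.Iio s) => (v.1:ℝ≥0∞)) ⟨c, hc2⟩) (not_le.2 hc1)
        calc f s = (⨆ v : ↥(Set.Iio s), (v.1:ℝ≥0∞)) / s * f s := by
              rw [hsup, ENNReal.div_self hs0 hstop, one_mul]
          _ = ⨆ v : ↥(Set.Iio s), (v.1:ℝ≥0∞) / s * f s := by
              rw [ENNReal.iSup_div, ENNReal.iSup_mul]
          _ ≤ M := iSup_le key
    · exact iSup₂_le fun t ht => hfm (hgm le_top)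




lemma musupp_congr' {f g : ℝ → ℂ} (h : f =ᵐ[volume] g) :
    volume (Function.support f) = volume (Function.support g) := by
  apply measure_congr
  filter_upwards [h] with x hx
  show (f x ≠ 0) = (g x ≠ 0)
  rw [hx]

lemma musupp_congr {ξ : L2R} {g : ℝ → ℂ} (h : ⇑ξ =ᵐ[volume] g) :
    musupp ξ = volume (Function.support g) := musupp_congr' h

lemma musupp_zero : musupp (0 : L2R) = 0 := by
  rw [musupp_congr (Lp.coeFn_zero ℂ 2 volume)]
  simp [Function.support_zero]

lemma musupp_le_phi (a : L2R →L[ℂ] L2R) (ξ : L2R) {x : ℝ≥0∞} (h : musupp ξ ≤ x) :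
    musupp (a ξ) ≤ Phi a x :=
  le_iSup (fun η : {ξ : L2R // musupp ξ ≤ x} => musupp (a η.1)) ⟨ξ, h⟩

lemma phi_mono (a : L2R →L[ℂ] L2R) : Monotone (Phi a) :=
  fun _ _ hxy => iSup_le fun ξ => musupp_le_phi a ξ.1 (ξ.2.trans hxy)

lemma phi_zero (a : L2R →L[ℂ] L2R) : Phi a 0 = 0 := by
  apply le_antisymm _ zero_le
  refine iSup_le fun ξ => ?_
  have hae : ⇑ξ.1 =ᵐ[volume] (0 : ℝ → ℂ) := by
    rw [Filter.EventuallyEq, ae_iff]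
    exact le_antisymm ξ.2 zero_le
  have h0 : ξ.1 = (0 : L2R) :=
    Lp.ext (hae.trans (Lp.coeFn_zero ℂ 2 volume).symm)
  rw [h0, map_zero, musupp_zero]

lemma phi_subadd (a : L2R →L[ℂ] L2R) (x y : ℝ≥0∞) :
    Phi a (x + y) ≤ Phi a x + Phi a y := by
  rcases eq_or_ne x ⊤ with rfl | hx
  · rw [top_add]; exact le_self_add
  rcases eq_or_ne y ⊤ with rfl | hy
  · rw [add_top]; exact le_add_self
  refine iSup_le fun ξp => ?_
  obtain ⟨ξ, hξ⟩ := ξp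
  rcases le_or_gt (musupp ξ) x with hle | hlt
  · exact le_trans (musupp_le_phi a ξ hle) le_self_add
  have ham := Lp.aestronglyMeasurable ξ
  set w : ℝ → ℂ := ham.mk ⇑ξ with hw
  have hw_meas : StronglyMeasurable w := ham.stronglyMeasurable_mk
  have hw_ae : ⇑ξ =ᵐ[volume] w := ham.ae_eq_mk
  set E : Set ℝ := Function.support w with hE
  have hEmeas : MeasurableSet E := hw_meas.measurableSet_support
  have hEvol : volume E = musupp ξ := (musupp_congr hw_ae).symm
  have hxy_ne : x + y ≠ ⊤ := ENNReal.add_ne_top.2 ⟨hx, hy⟩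
  have hEfin : volume E ≠ ⊤ := by
    rw [hEvol]; exact ne_top_of_le_ne_top hxy_ne hξ
  obtain ⟨S, hSE, hSmeas, hSvol⟩ :=
    exists_subset_volume_eq hEmeas (hEvol ▸ le_of_lt hlt) hx hEfin
  have hmemw : MemLp w 2 volume := (Lp.memLp ξ).ae_eq hw_ae
  have h1 : MemLp (S.indicator w) 2 volume := hmemw.indicator hSmeas
  have h2 : MemLp (Sᶜ.indicator w) 2 volume := hmemw.indicator hSmeas.compl
  set ξ1 : L2R := h1.toLp _ with hξ1
  set ξ2 : L2R := h2.toLp _ with hξ2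
  have hsum : ξ = ξ1 + ξ2 := by
    apply Lp.ext
    refine hw_ae.trans ?_
    have := (Lp.coeFn_add ξ1 ξ2).symm
    refine EventuallyEq.trans ?_ this
    have e1 := h1.coeFn_toLp
    have e2 := h2.coeFn_toLp
    filter_upwards [e1, e2] with z hz1 hz2
    show w z = ξ1 z + ξ2 z
    rw [hz1, hz2]
    exact (congrFun (Set.indicator_self_add_compl S w) z).symm
  have hμ1 : musupp ξ1 ≤ x := by
    rw [musupp_congr h1.coeFn_toLp]
    calc volume (Function.support (S.indicator w)) ≤ volume S :=
          measure_mono Set.support_indicator_subset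
      _ = x := hSvol
  have hμ2 : musupp ξ2 ≤ y := by
    rw [musupp_congr h2.coeFn_toLp]
    have hsub : Function.support (Sᶜ.indicator w) ⊆ E \ S := by
      intro z hz
      have hz1 : z ∈ Sᶜ := Set.support_indicator_subset hz
      have hz2 : z ∈ E := by
        rcases Set.mem_compl_iff S z |>.1 hz1 with h'
        have : Sᶜ.indicator w z = w z := Set.indicator_of_mem hz1 w
        exact Function.mem_support.2 (this ▸ Function.mem_support.1 hz)
      exact ⟨hz2, hz1⟩
    calc volume (Function.support (Sᶜ.indicator w)) ≤ volume (E \ S) := measure_mono hsub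
      _ = volume E - volume S := measure_diff hSE hSmeas.nullMeasurableSet
            (by rw [hSvol]; exact hx)
      _ ≤ y := by
          rw [hSvol]
          exact tsub_le_iff_left.2 (hEvol ▸ hξ)
  have hsupp_sub : musupp (a ξ) ≤ musupp (a ξ1) + musupp (a ξ2) := by
    have hco : ⇑(a ξ) =ᵐ[volume] ⇑(a ξ1) + ⇑(a ξ2) := by
      rw [hsum, map_add]
      exact Lp.coeFn_add (a ξ1) (a ξ2)
    calc musupp (a ξ)
        = volume (Function.support (⇑(a ξ1) + ⇑(a ξ2))) := musupp_congr hco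
      _ ≤ volume (Function.support ⇑(a ξ1) ∪ Function.support ⇑(a ξ2)) :=
          measure_mono (Function.support_add _ _)
      _ ≤ musupp (a ξ1) + musupp (a ξ2) := measure_union_le _ _
  exact le_trans hsupp_sub (add_le_add (musupp_le_phi a ξ1 hμ1) (musupp_le_phi a ξ2 hμ2))



lemma phi_top (a : L2R →L[ℂ] L2R) :
    Phi a ⊤ ≤ ⨆ t ∈ Set.Iio (⊤:ℝ≥0∞), Phi a t := by
  set S := ⨆ t ∈ Set.Iio (⊤:ℝ≥0∞), Phi a t with hS
  refine iSup_le fun ξp => ?_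
  obtain ⟨ξ, -⟩ := ξp
  have hdense := MeasureTheory.Lp.simpleFunc.denseRange (E := ℂ) (p := 2)
    (μ := (volume : Measure ℝ)) (by norm_num)
  obtain ⟨v, hv_mem, hv_tend⟩ := mem_closure_iff_seq_limit.1 (hdense ξ)
  -- each v n has finite support measure
  have hv_fin : ∀ n, musupp (v n) < ⊤ := by
    intro n
    obtain ⟨ψ, hψ⟩ := hv_mem n
    have he : ⇑(v n) =ᵐ[volume] ⇑(Lp.simpleFunc.toSimpleFunc ψ) := by
      rw [← hψ]
      exact (Lp.simpleFunc.toSimpleFunc_eq_toFun ψ).symm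
    rw [musupp_congr he]
    have hmem : MemLp (Lp.simpleFunc.toSimpleFunc ψ) 2 volume :=
      (Lp.memLp (v n)).ae_eq he
    exact MeasureTheory.SimpleFunc.measure_support_lt_top_of_memLp _ hmem (by norm_num) (by norm_num)
  have hv_le : ∀ n, musupp (a (v n)) ≤ S := fun n =>
    le_trans (musupp_le_phi a (v n) le_rfl)
      (le_iSup₂_of_le (musupp (v n)) (hv_fin n) le_rfl)
  -- convergence
  have htends : Tendsto (fun n => a (v n)) atTop (nhds (a ξ)) :=
    ((a.continuous.tendsto ξ).comp hv_tend)
  have hnorm : Tendsto (fun n => ‖a (v n) - a ξ‖) atTop (nhds 0) :=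
    tendsto_iff_norm_sub_tendsto_zero.1 htends
  have help : Tendsto (fun n => eLpNorm (⇑(a (v n)) - ⇑(a ξ)) 2 volume) atTop (nhds 0) := by
    have heq : ∀ n, eLpNorm (⇑(a (v n)) - ⇑(a ξ)) 2 volume
        = ENNReal.ofReal ‖a (v n) - a ξ‖ := by
      intro n
      rw [Lp.norm_def, ENNReal.ofReal_toReal (Lp.eLpNorm_ne_top _)]
      exact (eLpNorm_congr_ae (Lp.coeFn_sub (a (v n)) (a ξ))).symm
    simp only [heq]
    rw [show (0:ℝ≥0∞) = ENNReal.ofReal 0 by simp]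
    exact ENNReal.tendsto_ofReal hnorm
  have hmeas : TendstoInMeasure volume (fun n => ⇑(a (v n))) atTop ⇑(a ξ) :=
    tendstoInMeasure_of_tendsto_eLpNorm (p := 2) (by norm_num)
      (fun n => Lp.aestronglyMeasurable _) (Lp.aestronglyMeasurable _) help
  obtain ⟨ns, -, hns⟩ := hmeas.exists_seq_tendsto_ae
  set A : ℕ → Set ℝ := fun k => toMeasurable volume (Function.support ⇑(a (v (ns k)))) with hA
  have hAmeas : ∀ k, MeasurableSet (A k) := fun k => measurableSet_toMeasurable _ _
  have hAvol : ∀ k, volume (A k) ≤ S := by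
    intro k
    rw [hA]
    simp only
    rw [measure_toMeasurable]
    exact hv_le (ns k)
  set B : ℕ → Set ℝ := fun K => ⋂ (k) (_ : K ≤ k), A k with hB
  have hBmono : Monotone B := by
    intro K K' hKK'
    exact Set.iInter₂_mono' fun k hk => ⟨k, le_trans hKK' hk, subset_rfl⟩
  have hsubset : (Function.support ⇑(a ξ) : Set ℝ) ≤ᵐ[volume] (⋃ K, B K : Set ℝ) := by
    filter_upwards [hns] with z hz
    intro hzsupp
    have hne : ∀ᶠ k in atTop, ⇑(a (v (ns k))) z ≠ 0 :=
      hz.eventually_ne (Function.mem_support.1 hzsupp)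
    obtain ⟨K, hK⟩ := eventually_atTop.1 hne
    refine Set.mem_iUnion.2 ⟨K, ?_⟩
    refine Set.mem_iInter₂.2 fun k hk => ?_
    exact subset_toMeasurable _ _ (Function.mem_support.2 (hK k hk))
  calc musupp (a ξ) ≤ volume (⋃ K, B K) := measure_mono_ae hsubset
    _ = ⨆ K, volume (B K) := (hBmono.directed_le).measure_iUnion
    _ ≤ S := iSup_le fun K => le_trans
        (measure_mono (Set.iInter₂_subset K le_rfl)) (hAvol K)

end AuxSupportExpansion

/-- Every support expansion C*-algebra is generated by a nonempty family of ICOD functions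
closed under addition and composition. -/
theorem support_expansion_alg_generated_by_icod (F : Set (ℝ≥0∞ → ℝ≥0∞)) (hne : F.Nonempty)
    (hmono : ∀ f ∈ F, Monotone f)
    (hadd : ∀ f ∈ F, ∀ g ∈ F, (fun x => f x + g x) ∈ F)
    (hcomp : ∀ f ∈ F, ∀ g ∈ F, f ∘ g ∈ F) :
    ∃ G : Set (ℝ≥0∞ → ℝ≥0∞), G.Nonempty ∧ (∀ g ∈ G, ICOD g) ∧
      (∀ f ∈ G, ∀ g ∈ G, (fun x => f x + g x) ∈ G) ∧
      (∀ f ∈ G, ∀ g ∈ G, f ∘ g ∈ G) ∧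
      closure (⋃ g ∈ G, Bset g) = closure (⋃ f ∈ F, Bset f) := by
    classical
    set G : Set (ℝ≥0∞ → ℝ≥0∞) := {g | ICOD g ∧ ∃ f ∈ F, ∀ x, g x ≤ f x} with hG
    obtain ⟨f₀, hf₀⟩ := hne
    refine ⟨G, ⟨fun _ => 0, icod_zero, ⟨f₀, hf₀, fun x => zero_le⟩⟩,
      fun g hg => hg.1, ?_, ?_, ?_⟩
    · rintro g1 ⟨hg1, f1, hf1, hb1⟩ g2 ⟨hg2, f2, hf2, hb2⟩
      exact ⟨icod_add hg1 hg2, ⟨fun x => f1 x + f2 x, hadd f1 hf1 f2 hf2,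
        fun x => add_le_add (hb1 x) (hb2 x)⟩⟩
    · rintro g1 ⟨hg1, f1, hf1, hb1⟩ g2 ⟨hg2, f2, hf2, hb2⟩
      refine ⟨icod_comp hg1 hg2, ⟨f1 ∘ f2, hcomp f1 hf1 f2 hf2, fun x => ?_⟩⟩
      calc g1 (g2 x) ≤ g1 (f2 x) := hg1.1 (hb2 x)
        _ ≤ f1 (f2 x) := hb1 _
    · have hsets : (⋃ g ∈ G, Bset g) = ⋃ f ∈ F, Bset f := by
        apply Set.Subset.antisymm
        · refine Set.iUnion₂_subset fun g hg => ?_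
          obtain ⟨-, f, hf, hb⟩ := hg
          refine Set.subset_iUnion₂_of_subset f hf ?_
          rintro a ⟨ha1, ha2⟩
          exact ⟨fun x => le_trans (ha1 x) (hb x), fun x => le_trans (ha2 x) (hb x)⟩
        · refine Set.iUnion₂_subset fun f hf => ?_
          rintro a ⟨ha1, ha2⟩
          set h : ℝ≥0∞ → ℝ≥0∞ :=
            fun x => Phi a x + Phi (ContinuousLinearMap.adjoint a) x with hh
          have hhm : Monotone h := fun x y hxy =>
            add_le_add (phi_mono a hxy) (phi_mono _ hxy)
          have hh0 : h 0 = 0 := by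
            simp only [hh, phi_zero, add_zero]
          have hhsub : ∀ x y, h (x + y) ≤ h x + h y := by
            intro x y
            calc h (x + y)
                ≤ (Phi a x + Phi a y) +
                  (Phi (ContinuousLinearMap.adjoint a) x +
                    Phi (ContinuousLinearMap.adjoint a) y) :=
                  add_le_add (phi_subadd a x y) (phi_subadd _ x y)
              _ = h x + h y := by rw [hh]; ring
          have hhtop : h ⊤ ≤ ⨆ t ∈ Set.Iio (⊤:ℝ≥0∞), h t := by
            calc h ⊤ ≤ (⨆ t ∈ Set.Iio (⊤:ℝ≥0∞), Phi a t) +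
                  ⨆ t ∈ Set.Iio (⊤:ℝ≥0∞), Phi (ContinuousLinearMap.adjoint a) t :=
                  add_le_add (phi_top a) (phi_top _)
              _ ≤ ⨆ t ∈ Set.Iio (⊤:ℝ≥0∞), h t := by
                  refine ENNReal.biSup_add_biSup_le
                    ⟨0, Set.mem_Iio.2 zero_lt_top⟩ ⟨0, Set.mem_Iio.2 zero_lt_top⟩ ?_
                  intro i hi j hj
                  refine le_iSup₂_of_le (max i j)
                    (Set.mem_Iio.2 (max_lt (Set.mem_Iio.1 hi) (Set.mem_Iio.1 hj))) ?_
                  exact add_le_add (phi_mono a (le_max_left i j))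
                    (phi_mono _ (le_max_right i j))
          have hle := le_env hhm hh0 hhsub hhtop
          have hgle := env_le_two_mul (h := h) hhm
          set f4 : ℝ≥0∞ → ℝ≥0∞ := fun x => (f x + f x) + (f x + f x) with hf4
          have hf4F : f4 ∈ F := hadd _ (hadd f hf f hf) _ (hadd f hf f hf)
          have hbound : ∀ x, env h x ≤ f4 x := by
            intro x
            refine le_trans (hgle x) ?_
            have hhx : h x ≤ f x + f x := add_le_add (ha1 x) (ha2 x)
            calc 2 * h x = h x + h x := two_mul _
              _ ≤ (f x + f x) + (f x + f x) := add_le_add hhx hhx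
          refine Set.mem_iUnion₂.2 ⟨env h, ⟨env_icod, ⟨f4, hf4F, hbound⟩⟩, ?_⟩
          constructor
          · intro x
            exact le_trans (le_trans le_self_add (hle x)) le_rfl
          · intro x
            exact le_trans (le_trans le_add_self (hle x)) le_rfl
      rw [hsets]
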